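/- arXiv:2503.13677 — 5 statements merged into one kernel-verified Lean document; each statement's English description precedes it below -/
import Mathlib

section
/- Validity of the first tightening inequality (A.1): Let 0 ≤ P_min ≤ P_max, R ≥ 0, R̄ ≥ 0 be real parameters. Let u₀, u₁ ∈ {0,1}, y ∈ ℝ with 0 ≤ y, y ≥ u₁ − u₀, y ≤ u₁, y ≤ 1 − u₀, and let p₀, p₁ ∈ ℝ satisfy P_min·u_s ≤ p_s ≤ P_max·u_s for s ∈ {0,1}, p₁ − p₀ ≤ R·u₀ + R̄·(1 − u₀), and p₀ − p₁ ≤ R·u₁ + R̄·(1 − u₁). Then p₀ ≤ R̄·u₀ + (P_max − R̄)·(u₁ − y). -/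
/-- validity of tightening inequality (A.1). -/
theorem tightening_A1
    (Pmin Pmax R Rb u0 u1 y p0 p1 : ℝ)
    (hPmin : 0 ≤ Pmin) (hPP : Pmin ≤ Pmax) (hR : 0 ≤ R) (hRb : 0 ≤ Rb)
    (hu0 : u0 = 0 ∨ u0 = 1) (hu1 : u1 = 0 ∨ u1 = 1)
    (hy_nonneg : 0 ≤ y) (hy_trans : u1 - u0 ≤ y)
    (hy_up : y ≤ u1) (hy_down : y ≤ 1 - u0)
    (hp0_lb : Pmin * u0 ≤ p0) (hp0_ub : p0 ≤ Pmax * u0)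
    (hp1_lb : Pmin * u1 ≤ p1) (hp1_ub : p1 ≤ Pmax * u1)
    (hramp_up : p1 - p0 ≤ R * u0 + Rb * (1 - u0))
    (hramp_dn : p0 - p1 ≤ R * u1 + Rb * (1 - u1)) :
    p0 ≤ Rb * u0 + (Pmax - Rb) * (u1 - y) := by
  rcases hu0 with h0 | h0 <;> rcases hu1 with h1 | h1 <;> subst h0 h1 <;>
    nlinarith [mul_nonneg hPmin hy_nonneg]
end

section
/- Validity of the second tightening inequality (A.2): Let 0 ≤ P_min ≤ P_max, R ≥ 0, R̄ ≥ 0 be real parameters. Let u₀, u₁ ∈ {0,1}, y ∈ ℝ with 0 ≤ y, y ≥ u₁ − u₀, y ≤ u₁, y ≤ 1 − u₀, and let p₀, p₁ ∈ ℝ satisfy P_min·u_s ≤ p_s ≤ P_max·u_s for s ∈ {0,1}, p₁ − p₀ ≤ R·u₀ + R̄·(1 − u₀), and p₀ − p₁ ≤ R·u₁ + R̄·(1 − u₁). Then p₁ ≤ P_max·u₁ − (P_max − R̄)·y. -/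
/-- validity of tightening inequality (A.2). -/
theorem tightening_A2
    (Pmin Pmax R Rb u0 u1 y p0 p1 : ℝ)
    (hPmin : 0 ≤ Pmin) (hPP : Pmin ≤ Pmax) (hR : 0 ≤ R) (hRb : 0 ≤ Rb)
    (hu0 : u0 = 0 ∨ u0 = 1) (hu1 : u1 = 0 ∨ u1 = 1)
    (hy_nonneg : 0 ≤ y) (hy_trans : u1 - u0 ≤ y)
    (hy_up : y ≤ u1) (hy_down : y ≤ 1 - u0)
    (hp0_lb : Pmin * u0 ≤ p0) (hp0_ub : p0 ≤ Pmax * u0)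
    (hp1_lb : Pmin * u1 ≤ p1) (hp1_ub : p1 ≤ Pmax * u1)
    (hramp_up : p1 - p0 ≤ R * u0 + Rb * (1 - u0))
    (hramp_dn : p0 - p1 ≤ R * u1 + Rb * (1 - u1)) :
    p1 ≤ Pmax * u1 - (Pmax - Rb) * y := by
  rcases hu0 with h0 | h0 <;> rcases hu1 with h1 | h1 <;> subst h0 h1 <;>
    nlinarith [hy_nonneg, hy_up, hy_down, hy_trans]
end

section
/- Validity of the third tightening inequality (A.3): Let 0 ≤ P_min ≤ P_max, R ≥ 0, R̄ ≥ 0 be real parameters. Let u₀, u₁ ∈ {0,1}, y ∈ ℝ with 0 ≤ y, y ≥ u₁ − u₀, y ≤ u₁, y ≤ 1 − u₀, and let p₀, p₁ ∈ ℝ satisfy P_min·u_s ≤ p_s ≤ P_max·u_s for s ∈ {0,1}, p₁ − p₀ ≤ R·u₀ + R̄·(1 − u₀), and p₀ − p₁ ≤ R·u₁ + R̄·(1 − u₁). Then p₁ − p₀ ≤ (P_min + R)·u₁ − P_min·u₀ − (P_min + R − R̄)·y. -/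
/-- validity of tightening inequality (A.3). -/
theorem tightening_A3
    (Pmin Pmax R Rb u0 u1 y p0 p1 : ℝ)
    (hPmin : 0 ≤ Pmin) (hPP : Pmin ≤ Pmax) (hR : 0 ≤ R) (hRb : 0 ≤ Rb)
    (hu0 : u0 = 0 ∨ u0 = 1) (hu1 : u1 = 0 ∨ u1 = 1)
    (hy_nonneg : 0 ≤ y) (hy_trans : u1 - u0 ≤ y)
    (hy_up : y ≤ u1) (hy_down : y ≤ 1 - u0)
    (hp0_lb : Pmin * u0 ≤ p0) (hp0_ub : p0 ≤ Pmax * u0)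
    (hp1_lb : Pmin * u1 ≤ p1) (hp1_ub : p1 ≤ Pmax * u1)
    (hramp_up : p1 - p0 ≤ R * u0 + Rb * (1 - u0))
    (hramp_dn : p0 - p1 ≤ R * u1 + Rb * (1 - u1)) :
    p1 - p0 ≤ (Pmin + R) * u1 - Pmin * u0 - (Pmin + R - Rb) * y := by
  rcases hu0 with h0 | h0 <;> rcases hu1 with h1 | h1 <;> subst h0 h1 <;>
    nlinarith [hy_nonneg, hy_up, hy_down, hy_trans]
end

section
/- Validity of the fourth tightening inequality (A.4): Let 0 ≤ P_min ≤ P_max, R ≥ 0, R̄ ≥ 0 be real parameters. Let u₀, u₁ ∈ {0,1}, y ∈ ℝ with 0 ≤ y, y ≥ u₁ − u₀, y ≤ u₁, y ≤ 1 − u₀, and let p₀, p₁ ∈ ℝ satisfy P_min·u_s ≤ p_s ≤ P_max·u_s for s ∈ {0,1}, p₁ − p₀ ≤ R·u₀ + R̄·(1 − u₀), and p₀ − p₁ ≤ R·u₁ + R̄·(1 − u₁). Then p₀ − p₁ ≤ R̄·u₀ − (R̄ − R)·u₁ − (P_min + R − R̄)·y. -/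
/-- validity of tightening inequality (A.4). -/
theorem tightening_A4
    (Pmin Pmax R Rb u0 u1 y p0 p1 : ℝ)
    (hPmin : 0 ≤ Pmin) (hPP : Pmin ≤ Pmax) (hR : 0 ≤ R) (hRb : 0 ≤ Rb)
    (hu0 : u0 = 0 ∨ u0 = 1) (hu1 : u1 = 0 ∨ u1 = 1)
    (hy_nonneg : 0 ≤ y) (hy_trans : u1 - u0 ≤ y)
    (hy_up : y ≤ u1) (hy_down : y ≤ 1 - u0)
    (hp0_lb : Pmin * u0 ≤ p0) (hp0_ub : p0 ≤ Pmax * u0)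
    (hp1_lb : Pmin * u1 ≤ p1) (hp1_ub : p1 ≤ Pmax * u1)
    (hramp_up : p1 - p0 ≤ R * u0 + Rb * (1 - u0))
    (hramp_dn : p0 - p1 ≤ R * u1 + Rb * (1 - u1)) :
    p0 - p1 ≤ Rb * u0 - (Rb - R) * u1 - (Pmin + R - Rb) * y := by
  rcases hu0 with h0 | h0 <;> rcases hu1 with h1 | h1 <;> subst h0 <;> subst h1 <;>
    nlinarith [mul_nonneg hPmin hy_nonneg, mul_nonneg hR hy_nonneg, mul_nonneg hRb hy_nonneg]
end

section
/- The tightened two-period polytope contains the convex hull of the binary unit-commitment feasible set: Let 0 ≤ P_min ≤ P_max, R ≥ 0, R̄ ≥ 0. Define S ⊆ ℝ⁵ as the set of (p₀, p₁, u₀, u₁, y) with u₀, u₁ ∈ {0,1}, 0 ≤ y, y ≥ u₁ − u₀, y ≤ u₁, y ≤ 1 − u₀, P_min·u_s ≤ p_s ≤ P_max·u_s for s ∈ {0,1}, p₁ − p₀ ≤ R·u₀ + R̄·(1 − u₀), and p₀ − p₁ ≤ R·u₁ + R̄·(1 − u₁). Define P ⊆ ℝ⁵ by the same linear constraints with the binary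 requirements relaxed to 0 ≤ u₀ ≤ 1 and 0 ≤ u₁ ≤ 1, together with the four additional inequalities p₀ ≤ R̄·u₀ + (P_max − R̄)·(u₁ − y), p₁ ≤ P_max·u₁ − (P_max − R̄)·y, p₁ − p₀ ≤ (P_min + R)·u₁ − P_min·u₀ − (P_min + R − R̄)·y, and p₀ − p₁ ≤ R̄·u₀ − (R̄ − R)·u₁ − (P_min + R − R̄)·y. Then the convex hull (over ℝ) of S is contained in P. -/
/-- The common linear constraints (state transition, output limits, ramping)
for a single generator over two consecutive periods, for the point
`(p₀, p₁, u₀, u₁, y)`. -/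
def ucLinConstraints (Pmin Pmax R Rb p0 p1 u0 u1 y : ℝ) : Prop :=
  0 ≤ y ∧ u1 - u0 ≤ y ∧ y ≤ u1 ∧ y ≤ 1 - u0 ∧
  Pmin * u0 ≤ p0 ∧ p0 ≤ Pmax * u0 ∧
  Pmin * u1 ≤ p1 ∧ p1 ≤ Pmax * u1 ∧
  p1 - p0 ≤ R * u0 + Rb * (1 - u0) ∧
  p0 - p1 ≤ R * u1 + Rb * (1 - u1)

/-- The binary two-period unit-commitment feasible set `S ⊆ ℝ⁵`,
with coordinates `(p₀, p₁, u₀, u₁, y)`. -/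
def ucBinarySet (Pmin Pmax R Rb : ℝ) : Set (ℝ × ℝ × ℝ × ℝ × ℝ) :=
  {v | (v.2.2.1 = 0 ∨ v.2.2.1 = 1) ∧ (v.2.2.2.1 = 0 ∨ v.2.2.2.1 = 1) ∧
    ucLinConstraints Pmin Pmax R Rb v.1 v.2.1 v.2.2.1 v.2.2.2.1 v.2.2.2.2}

/-- The tightened relaxed polytope `P ⊆ ℝ⁵`: the binary requirements are
relaxed to `[0,1]` and the four valid inequalities (A.1)–(A.4) are added. -/
def ucTightenedPolytope (Pmin Pmax R Rb : ℝ) : Set (ℝ × ℝ × ℝ × ℝ × ℝ) :=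
  {v | (0 ≤ v.2.2.1 ∧ v.2.2.1 ≤ 1) ∧ (0 ≤ v.2.2.2.1 ∧ v.2.2.2.1 ≤ 1) ∧
    ucLinConstraints Pmin Pmax R Rb v.1 v.2.1 v.2.2.1 v.2.2.2.1 v.2.2.2.2 ∧
    v.1 ≤ Rb * v.2.2.1 + (Pmax - Rb) * (v.2.2.2.1 - v.2.2.2.2) ∧
    v.2.1 ≤ Pmax * v.2.2.2.1 - (Pmax - Rb) * v.2.2.2.2 ∧
    v.2.1 - v.1 ≤ (Pmin + R) * v.2.2.2.1 - Pmin * v.2.2.1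
      - (Pmin + R - Rb) * v.2.2.2.2 ∧
    v.1 - v.2.1 ≤ Rb * v.2.2.1 - (Rb - R) * v.2.2.2.1
      - (Pmin + R - Rb) * v.2.2.2.2}

/-- the tightened two-period polytope contains the convex hull
of the binary unit-commitment feasible set. -/
theorem convexHull_ucBinarySet_subset_tightened
    (Pmin Pmax R Rb : ℝ)
    (hPmin : 0 ≤ Pmin) (hPP : Pmin ≤ Pmax) (hR : 0 ≤ R) (hRb : 0 ≤ Rb) :
    convexHull ℝ (ucBinarySet Pmin Pmax R Rb) ⊆
      ucTightenedPolytope Pmin Pmax R Rb := by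
  apply convexHull_min
  · -- S ⊆ P
    rintro ⟨p0, p1, u0, u1, y⟩ ⟨hu0, hu1, h1, h2, h3, h4, h5, h6, h7, h8, h9, h10⟩
    simp only [ucTightenedPolytope, ucLinConstraints, Set.mem_setOf_eq] at *
    rcases hu0 with h | h <;> rcases hu1 with h' | h' <;> subst h <;> subst h' <;>
      [ (have hy : y = (0:ℝ) := by linarith);
        (have hy : y = (1:ℝ) := by linarith);
        (have hy : y = (0:ℝ) := by linarith);
        (have hy : y = (0:ℝ) := by linarith) ] <;> subst hy <;>
      refine ⟨⟨by norm_num, by norm_num⟩, ⟨by norm_num, by norm_num⟩,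
        ⟨h1, h2, h3, h4, h5, h6, h7, h8, h9, h10⟩, ?_, ?_, ?_, ?_⟩ <;> linarith
  · -- P is convex
    rintro ⟨p0, p1, u0, u1, y⟩ hx ⟨q0, q1, v0, v1, z⟩ hy a b ha hb hab
    simp only [ucTightenedPolytope, ucLinConstraints, Set.mem_setOf_eq,
      Prod.smul_mk, Prod.mk_add_mk, smul_eq_mul] at *
    obtain ⟨⟨x1, x2⟩, ⟨x3, x4⟩, ⟨x5, x6, x7, x8, x9, x10, x11, x12, x13, x14⟩,
      x15, x16, x17, x18⟩ := hx
    obtain ⟨⟨y1, y2⟩, ⟨y3, y4⟩, ⟨y5, y6, y7, y8, y9, y10, y11, y12, y13, y14⟩,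
      z15, z16, z17, z18⟩ := hy
    obtain rfl : b = 1 - a := by linarith
    refine ⟨⟨by linarith [mul_le_mul_of_nonneg_left x1 ha, mul_le_mul_of_nonneg_left y1 hb],
      by linarith [mul_le_mul_of_nonneg_left x2 ha, mul_le_mul_of_nonneg_left y2 hb]⟩, ⟨by linarith [mul_le_mul_of_nonneg_left x3 ha, mul_le_mul_of_nonneg_left y3 hb],
      by linarith [mul_le_mul_of_nonneg_left x4 ha, mul_le_mul_of_nonneg_left y4 hb]⟩,
      ⟨by linarith [mul_le_mul_of_nonneg_left x5 ha, mul_le_mul_of_nonneg_left y5 hb],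
      by linarith [mul_le_mul_of_nonneg_left x6 ha, mul_le_mul_of_nonneg_left y6 hb],
      by linarith [mul_le_mul_of_nonneg_left x7 ha, mul_le_mul_of_nonneg_left y7 hb],
      by linarith [mul_le_mul_of_nonneg_left x8 ha, mul_le_mul_of_nonneg_left y8 hb],
      by linarith [mul_le_mul_of_nonneg_left x9 ha, mul_le_mul_of_nonneg_left y9 hb],
      by linarith [mul_le_mul_of_nonneg_left x10 ha, mul_le_mul_of_nonneg_left y10 hb],
      by linarith [mul_le_mul_of_nonneg_left x11 ha, mul_le_mul_of_nonneg_left y11 hb],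
      by linarith [mul_le_mul_of_nonneg_left x12 ha, mul_le_mul_of_nonneg_left y12 hb],
      by linarith [mul_le_mul_of_nonneg_left x13 ha, mul_le_mul_of_nonneg_left y13 hb],
      by linarith [mul_le_mul_of_nonneg_left x14 ha, mul_le_mul_of_nonneg_left y14 hb]⟩,
      by linarith [mul_le_mul_of_nonneg_left x15 ha, mul_le_mul_of_nonneg_left z15 hb],
      by linarith [mul_le_mul_of_nonneg_left x16 ha, mul_le_mul_of_nonneg_left z16 hb],
      by linarith [mul_le_mul_of_nonneg_left x17 ha, mul_le_mul_of_nonneg_left z17 hb],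
      by linarith [mul_le_mul_of_nonneg_left x18 ha, mul_le_mul_of_nonneg_left z18 hb]⟩
end
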